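/- There exist constants C > 0 and c₀ > 0 such that for every ξ ∈ ℝ and every differentiable function W : [0,∞) → ℂ³ satisfying A⁰·W'(t) + (i·ξ·A(ξ) + ξ²·B)·W(t) = 0 for all t ≥ 0 (the real matrices acting on ℂ³ by complexification), the estimate (1+ξ²)·|W₁(t)|² + |W₂(t)|² + |W₃(t)|² ≤ C·exp(−2·c₀·ξ²·t)·[(1+ξ²)·|W₁(0)|² + |W₂(0)|² + |W₃(0)|²] holds for all t ≥ 0, with C and c₀ independent of ξ and of W. -/

import Mathlib

open Matrix

set_option maxHeartbeats 1600000 in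
lemma nsfk_quad (ρ θ pρ pθ eθ k μ α ε c₃ : ℝ)
    (hρ : 0 < ρ) (hθ : 0 < θ) (hpρ : 0 < pρ) (hpθ : 0 < pθ) (heθ : 0 < eθ)
    (hk : 0 < k) (hμ : 0 < μ) (hα : 0 < α)
    (hε0 : 0 < ε) (hε1 : ε ≤ k) (hε2 : ε ≤ ρ)
    (hε3 : ε * (θ * pθ ^ 2) ≤ 2 * α * ρ * pρ)
    (hε4 : ε * (μ ^ 2 + 2 * k * ρ ^ 3) ≤ 2 * k * μ * ρ ^ 2)
    (hc0 : 0 ≤ c₃) (hc1 : c₃ ≤ ε / 2) (hc2 : c₃ * ρ ≤ μ) (hc3 : c₃ * (eθ * ρ) ≤ α)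
    (ξ r0 i0 r1 i1 r2 i2 : ℝ) :
    c₃ * (eθ * θ * (pρ + ξ ^ 2 * k * ρ) * (r0 ^ 2 + i0 ^ 2) + eθ * θ * ρ ^ 2 * (r1 ^ 2 + i1 ^ 2)
        + eθ ^ 2 * ρ ^ 2 * (r2 ^ 2 + i2 ^ 2)) ≤
      ε * eθ * θ * (pρ + ξ ^ 2 * k * ρ) * (r0 ^ 2 + i0 ^ 2)
        + (2 * μ * eθ * θ * ρ - ε * ρ ^ 2 * eθ * θ) * (r1 ^ 2 + i1 ^ 2)
        + 2 * α * eθ * ρ * (r2 ^ 2 + i2 ^ 2)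
        + ε * eθ * θ * pθ * (r0 * r2 + i0 * i2)
        - ε * ξ * eθ * θ * μ * (i0 * r1 - r0 * i1) := by
  have hx2 : (0:ℝ) ≤ r0 ^ 2 + i0 ^ 2 := by positivity
  have hy2 : (0:ℝ) ≤ r1 ^ 2 + i1 ^ 2 := by positivity
  have hz2 : (0:ℝ) ≤ r2 ^ 2 + i2 ^ 2 := by positivity
  have heθθ : (0:ℝ) < eθ * θ := mul_pos heθ hθ
  have hP : 2 * pρ * (-(ε * eθ * θ * pθ * (r0 * r2 + i0 * i2))) ≤
      ε * eθ * θ * pρ ^ 2 * (r0 ^ 2 + i0 ^ 2) + 2 * α * ρ * pρ * eθ * (r2 ^ 2 + i2 ^ 2) := by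
    nlinarith [mul_nonneg (mul_nonneg hε0.le heθθ.le) (sq_nonneg (pρ * r0 + pθ * r2)),
      mul_nonneg (mul_nonneg hε0.le heθθ.le) (sq_nonneg (pρ * i0 + pθ * i2)),
      mul_le_mul_of_nonneg_right hε3 (mul_nonneg heθ.le hz2)]
  have hP' : -(ε * eθ * θ * pθ * (r0 * r2 + i0 * i2)) ≤
      ε / 2 * (eθ * θ * pρ) * (r0 ^ 2 + i0 ^ 2) + α * (eθ * ρ) * (r2 ^ 2 + i2 ^ 2) := by
    nlinarith [hP, hpρ]
  have hQ : 2 * (k * ρ) * (ε * ξ * eθ * θ * μ * (i0 * r1 - r0 * i1)) ≤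
      ε * eθ * θ * (k ^ 2 * ρ ^ 2 * ξ ^ 2 * (r0 ^ 2 + i0 ^ 2)) +
        ε * eθ * θ * μ ^ 2 * (r1 ^ 2 + i1 ^ 2) := by
    nlinarith [mul_nonneg (mul_nonneg hε0.le heθθ.le) (sq_nonneg (k * ρ * ξ * i0 - μ * r1)),
      mul_nonneg (mul_nonneg hε0.le heθθ.le) (sq_nonneg (k * ρ * ξ * r0 + μ * i1))]
  have hQ' : ε * ξ * eθ * θ * μ * (i0 * r1 - r0 * i1) ≤
      ε / 2 * (eθ * θ * k * ρ) * (ξ ^ 2 * (r0 ^ 2 + i0 ^ 2)) +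
        (μ * ρ - ε * ρ ^ 2) * (eθ * θ) * (r1 ^ 2 + i1 ^ 2) := by
    nlinarith [hQ, mul_pos hk hρ,
      mul_le_mul_of_nonneg_right hε4 (mul_nonneg heθθ.le hy2)]
  have hA : c₃ * (eθ * θ * (pρ + ξ ^ 2 * k * ρ) * (r0 ^ 2 + i0 ^ 2)) ≤
      ε / 2 * (eθ * θ * (pρ + ξ ^ 2 * k * ρ) * (r0 ^ 2 + i0 ^ 2)) :=
    mul_le_mul_of_nonneg_right hc1 (by positivity)
  have hB : c₃ * (eθ * θ * ρ ^ 2 * (r1 ^ 2 + i1 ^ 2)) ≤ μ * ρ * (eθ * θ) * (r1 ^ 2 + i1 ^ 2) := by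
    nlinarith [mul_le_mul_of_nonneg_right hc2
      (by positivity : (0:ℝ) ≤ eθ * θ * ρ * (r1 ^ 2 + i1 ^ 2))]
  have hC : c₃ * (eθ ^ 2 * ρ ^ 2 * (r2 ^ 2 + i2 ^ 2)) ≤ α * (eθ * ρ) * (r2 ^ 2 + i2 ^ 2) := by
    nlinarith [mul_le_mul_of_nonneg_right hc3
      (by positivity : (0:ℝ) ≤ eθ * ρ * (r2 ^ 2 + i2 ^ 2))]
  nlinarith [hP', hQ', hA, hB, hC]

set_option maxHeartbeats 1600000 in
lemma nsfk_cmp (ρ θ eθ k ε : ℝ)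
    (hρ : 0 < ρ) (hθ : 0 < θ) (heθ : 0 < eθ) (hk : 0 < k)
    (hε0 : 0 < ε) (hε1 : ε ≤ k) (hε2 : ε ≤ ρ)
    (ξ r0 i0 r1 i1 r2 i2 pρ : ℝ) (hpρ : 0 < pρ) :
    (eθ * θ * (pρ + ξ ^ 2 * k * ρ) * (r0 ^ 2 + i0 ^ 2) + eθ * θ * ρ ^ 2 * (r1 ^ 2 + i1 ^ 2)
        + eθ ^ 2 * ρ ^ 2 * (r2 ^ 2 + i2 ^ 2)) ≤
      2 * ((eθ * θ * (pρ + ξ ^ 2 * k * ρ) * (r0 ^ 2 + i0 ^ 2) + eθ * θ * ρ ^ 2 * (r1 ^ 2 + i1 ^ 2)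
        + eθ ^ 2 * ρ ^ 2 * (r2 ^ 2 + i2 ^ 2)) - ε * (ρ * eθ * θ) * ξ * (i0 * r1 - r0 * i1)) ∧
    2 * ((eθ * θ * (pρ + ξ ^ 2 * k * ρ) * (r0 ^ 2 + i0 ^ 2) + eθ * θ * ρ ^ 2 * (r1 ^ 2 + i1 ^ 2)
        + eθ ^ 2 * ρ ^ 2 * (r2 ^ 2 + i2 ^ 2)) - ε * (ρ * eθ * θ) * ξ * (i0 * r1 - r0 * i1)) ≤
      3 * (eθ * θ * (pρ + ξ ^ 2 * k * ρ) * (r0 ^ 2 + i0 ^ 2) + eθ * θ * ρ ^ 2 * (r1 ^ 2 + i1 ^ 2)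
        + eθ ^ 2 * ρ ^ 2 * (r2 ^ 2 + i2 ^ 2)) := by
  have hx2 : (0:ℝ) ≤ r0 ^ 2 + i0 ^ 2 := by positivity
  have hs : (0:ℝ) < ρ * eθ * θ := by positivity
  have k1 : -(ε * (ρ * eθ * θ) * ξ * (i0 * r1 - r0 * i1)) ≤
      (1/2) * (eθ * θ * k * ρ * (ξ ^ 2 * (r0 ^ 2 + i0 ^ 2)) + eθ * θ * ρ ^ 2 * (r1 ^ 2 + i1 ^ 2)) := by
    nlinarith [mul_nonneg (mul_nonneg hε0.le hs.le) (sq_nonneg (ξ * i0 + r1)),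
      mul_nonneg (mul_nonneg hε0.le hs.le) (sq_nonneg (ξ * r0 - i1)),
      mul_le_mul_of_nonneg_right hε1 (by positivity : (0:ℝ) ≤ ρ * eθ * θ * (ξ ^ 2 * (r0 ^ 2 + i0 ^ 2))),
      mul_le_mul_of_nonneg_right hε2 (by positivity : (0:ℝ) ≤ ρ * eθ * θ * (r1 ^ 2 + i1 ^ 2))]
  have k2 : ε * (ρ * eθ * θ) * ξ * (i0 * r1 - r0 * i1) ≤
      (1/2) * (eθ * θ * k * ρ * (ξ ^ 2 * (r0 ^ 2 + i0 ^ 2)) + eθ * θ * ρ ^ 2 * (r1 ^ 2 + i1 ^ 2)) := by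
    nlinarith [mul_nonneg (mul_nonneg hε0.le hs.le) (sq_nonneg (ξ * i0 - r1)),
      mul_nonneg (mul_nonneg hε0.le hs.le) (sq_nonneg (ξ * r0 + i1)),
      mul_le_mul_of_nonneg_right hε1 (by positivity : (0:ℝ) ≤ ρ * eθ * θ * (ξ ^ 2 * (r0 ^ 2 + i0 ^ 2))),
      mul_le_mul_of_nonneg_right hε2 (by positivity : (0:ℝ) ≤ ρ * eθ * θ * (r1 ^ 2 + i1 ^ 2))]
  constructor
  · nlinarith [k2, mul_nonneg (mul_nonneg (mul_nonneg heθ.le hθ.le) hpρ.le) hx2,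
      (by positivity : (0:ℝ) ≤ eθ ^ 2 * ρ ^ 2 * (r2 ^ 2 + i2 ^ 2))]
  · nlinarith [k1, mul_nonneg (mul_nonneg (mul_nonneg heθ.le hθ.le) hpρ.le) hx2,
      (by positivity : (0:ℝ) ≤ eθ ^ 2 * ρ ^ 2 * (r2 ^ 2 + i2 ^ 2))]

set_option maxHeartbeats 1600000 in
lemma nsfk_deriv_id (ρ θ pρ pθ eθ k μ α u ξ ε r0 i0 r1 i1 r2 i2 : ℝ)
    (hρ : ρ ≠ 0) (hθ : θ ≠ 0) (heθ : eθ ≠ 0) :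
    -(ξ ^ 2) * (ε * eθ * θ * (pρ + ξ ^ 2 * k * ρ) * (r0 ^ 2 + i0 ^ 2)
        + (2 * μ * eθ * θ * ρ - ε * ρ ^ 2 * eθ * θ) * (r1 ^ 2 + i1 ^ 2)
        + 2 * α * eθ * ρ * (r2 ^ 2 + i2 ^ 2)
        + ε * eθ * θ * pθ * (r0 * r2 + i0 * i2)
        - ε * ξ * eθ * θ * μ * (i0 * r1 - r0 * i1)) =
      eθ * θ * (pρ + ξ ^ 2 * k * ρ) *
          ((ξ * (u * i0 + ρ * i1)) * r0 + r0 * (ξ * (u * i0 + ρ * i1)) +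
            ((-(ξ * (u * r0 + ρ * r1))) * i0 + i0 * (-(ξ * (u * r0 + ρ * r1))))) +
        eθ * θ * ρ ^ 2 *
          ((ρ⁻¹ * (ξ * ((pρ + ξ ^ 2 * k * ρ) * i0 + ρ * u * i1 + pθ * i2) - ξ ^ 2 * μ * r1)) * r1 +
            r1 * (ρ⁻¹ * (ξ * ((pρ + ξ ^ 2 * k * ρ) * i0 + ρ * u * i1 + pθ * i2) - ξ ^ 2 * μ * r1)) +
            ((ρ⁻¹ * (-(ξ * ((pρ + ξ ^ 2 * k * ρ) * r0 + ρ * u * r1 + pθ * r2)) - ξ ^ 2 * μ * i1)) * i1 +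
              i1 * (ρ⁻¹ * (-(ξ * ((pρ + ξ ^ 2 * k * ρ) * r0 + ρ * u * r1 + pθ * r2)) - ξ ^ 2 * μ * i1)))) +
        eθ ^ 2 * ρ ^ 2 *
          (((eθ * ρ)⁻¹ * (ξ * (pθ * θ * i1 + ρ * u * eθ * i2) - ξ ^ 2 * α * r2)) * r2 +
            r2 * ((eθ * ρ)⁻¹ * (ξ * (pθ * θ * i1 + ρ * u * eθ * i2) - ξ ^ 2 * α * r2)) +
            (((eθ * ρ)⁻¹ * (-(ξ * (pθ * θ * r1 + ρ * u * eθ * r2)) - ξ ^ 2 * α * i2)) * i2 +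
              i2 * ((eθ * ρ)⁻¹ * (-(ξ * (pθ * θ * r1 + ρ * u * eθ * r2)) - ξ ^ 2 * α * i2)))) -
        ε * (ρ * eθ * θ) * ξ *
          (((-(ξ * (u * r0 + ρ * r1))) * r1 +
              i0 * (ρ⁻¹ * (ξ * ((pρ + ξ ^ 2 * k * ρ) * i0 + ρ * u * i1 + pθ * i2) - ξ ^ 2 * μ * r1))) -
            ((ξ * (u * i0 + ρ * i1)) * i1 +
              r0 * (ρ⁻¹ * (-(ξ * ((pρ + ξ ^ 2 * k * ρ) * r0 + ρ * u * r1 + pθ * r2)) - ξ ^ 2 * μ * i1)))) := by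
  field_simp
  ring

lemma nsfk_gronwall {f g : ℝ → ℝ} {a : ℝ}
    (hf : ∀ t ∈ Set.Ici (0:ℝ), HasDerivAt f (g t) t)
    (hle : ∀ t ∈ Set.Ici (0:ℝ), g t ≤ -a * f t) :
    ∀ t ∈ Set.Ici (0:ℝ), f t ≤ f 0 * Real.exp (-(a * t)) := by
  intro t ht
  have hde : ∀ s ∈ Set.Ici (0:ℝ),
      HasDerivAt (fun s => f s * Real.exp (a * s))
        (g s * Real.exp (a * s) + f s * (Real.exp (a * s) * a)) s := by
    intro s hs
    have h1 : HasDerivAt (fun s : ℝ => a * s) a s := by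
      simpa using (hasDerivAt_id s).const_mul a
    exact (hf s hs).mul h1.exp
  have anti : AntitoneOn (fun s => f s * Real.exp (a * s)) (Set.Ici 0) := by
    apply antitoneOn_of_deriv_nonpos (convex_Ici 0)
    · intro s hs
      exact (hde s hs).continuousAt.continuousWithinAt
    · intro s hs
      rw [interior_Ici] at hs
      exact ((hde s (Set.mem_Ici.mpr (le_of_lt (Set.mem_Ioi.mp hs)))).differentiableAt).differentiableWithinAt
    · intro s hs
      rw [interior_Ici] at hs
      rw [(hde s (Set.mem_Ici.mpr (le_of_lt (Set.mem_Ioi.mp hs)))).deriv]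
      have h2 := hle s (Set.mem_Ici.mpr (le_of_lt (Set.mem_Ioi.mp hs)))
      nlinarith [Real.exp_pos (a * s)]
  have h0 : f t * Real.exp (a * t) ≤ f 0 * Real.exp (a * 0) :=
    anti Set.self_mem_Ici ht ht
  have h2 := mul_le_mul_of_nonneg_right h0 (Real.exp_pos (-(a * t))).le
  calc f t = f t * Real.exp (a * t) * Real.exp (-(a * t)) := by
        rw [mul_assoc, ← Real.exp_add]; simp
    _ ≤ f 0 * Real.exp (a * 0) * Real.exp (-(a * t)) := h2
    _ = f 0 * Real.exp (-(a * t)) := by simp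

lemma nsfk_combine (c₃ ξ E0 E Bk : ℝ) (hc : 0 ≤ c₃)
    (h1 : c₃ * E0 ≤ Bk) (h2 : 2 * E ≤ 3 * E0) :
    -(ξ ^ 2) * Bk ≤ -(2 * (c₃/3) * ξ ^ 2) * E := by
  nlinarith [mul_le_mul_of_nonneg_left h1 (sq_nonneg ξ),
    mul_le_mul_of_nonneg_left h2 (mul_nonneg hc (sq_nonneg ξ))]

set_option maxHeartbeats 3200000 in
/-- Pointwise decay estimate in Fourier space for the solutions of the linearized
Navier–Stokes–Fourier–Korteweg system `A⁰Ŵ' + (iξA(ξ) + ξ²B)Ŵ = 0`, with the density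
component weighted by `(1+ξ²)`. -/
theorem nsfk_pointwise_fourier_decay (ρ θ pρ pθ eθ k μ α u : ℝ)
    (hρ : 0 < ρ) (hθ : 0 < θ) (hpρ : 0 < pρ) (hpθ : 0 < pθ) (heθ : 0 < eθ)
    (hk : 0 < k) (hμ : 0 < μ) (hα : 0 < α) :
    ∃ C : ℝ, 0 < C ∧ ∃ c₀ : ℝ, 0 < c₀ ∧
      ∀ ξ : ℝ,
        let β : ℝ := pρ + ξ ^ 2 * k * ρ
        let A0 : Matrix (Fin 3) (Fin 3) ℂ :=
          ((1 / θ) • !![pρ / ρ, 0, 0; 0, ρ, 0; 0, 0, eθ * ρ / θ]).map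
            (fun x : ℝ => (x : ℂ))
        let A : Matrix (Fin 3) (Fin 3) ℂ :=
          ((1 / θ) • !![pρ * u / ρ, pρ, 0; β, ρ * u, pθ; 0, pθ, ρ * u * eθ / θ]).map
            (fun x : ℝ => (x : ℂ))
        let B : Matrix (Fin 3) (Fin 3) ℂ :=
          ((1 / θ) • !![0, 0, 0; 0, μ, 0; 0, 0, α / θ]).map
            (fun x : ℝ => (x : ℂ))
        ∀ W : ℝ → (Fin 3 → ℂ),
          (∀ t : ℝ, 0 ≤ t → ∃ D : Fin 3 → ℂ,
            HasDerivAt W D t ∧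
              A0.mulVec D +
                ((Complex.I * (ξ : ℂ)) • A + ((ξ : ℂ) ^ 2) • B).mulVec (W t) = 0) →
          ∀ t : ℝ, 0 ≤ t →
            (1 + ξ ^ 2) * ‖W t 0‖ ^ 2 + ‖W t 1‖ ^ 2 + ‖W t 2‖ ^ 2 ≤
              C * Real.exp (-2 * c₀ * ξ ^ 2 * t) *
                ((1 + ξ ^ 2) * ‖W 0 0‖ ^ 2 + ‖W 0 1‖ ^ 2 + ‖W 0 2‖ ^ 2) := by
  have hθ' : (θ:ℂ) ≠ 0 := Complex.ofReal_ne_zero.mpr hθ.ne'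
  have hρ' : (ρ:ℂ) ≠ 0 := Complex.ofReal_ne_zero.mpr hρ.ne'
  have hpρ' : (pρ:ℂ) ≠ 0 := Complex.ofReal_ne_zero.mpr hpρ.ne'
  have heθ' : (eθ:ℂ) ≠ 0 := Complex.ofReal_ne_zero.mpr heθ.ne'
  set ε := min (min k ρ) (min (2*α*ρ*pρ/(θ*pθ^2)) (2*k*μ*ρ^2/(μ^2+2*k*ρ^3))) with hεdef
  have hε0 : 0 < ε := lt_min (lt_min hk hρ) (lt_min (by positivity) (by positivity))
  have hε1 : ε ≤ k := le_trans (min_le_left _ _) (min_le_left _ _)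
  have hε2 : ε ≤ ρ := le_trans (min_le_left _ _) (min_le_right _ _)
  have hε3 : ε * (θ * pθ ^ 2) ≤ 2 * α * ρ * pρ := by
    have h : ε ≤ 2*α*ρ*pρ/(θ*pθ^2) := le_trans
      (min_le_right (min k ρ) (min (2*α*ρ*pρ/(θ*pθ^2)) (2*k*μ*ρ^2/(μ^2+2*k*ρ^3))))
      (min_le_left (2*α*ρ*pρ/(θ*pθ^2)) (2*k*μ*ρ^2/(μ^2+2*k*ρ^3)))
    rw [le_div_iff₀ (by positivity)] at h
    linarith
  have hε4 : ε * (μ ^ 2 + 2 * k * ρ ^ 3) ≤ 2 * k * μ * ρ ^ 2 := by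
    have h : ε ≤ 2*k*μ*ρ^2/(μ^2+2*k*ρ^3) := le_trans
      (min_le_right (min k ρ) (min (2*α*ρ*pρ/(θ*pθ^2)) (2*k*μ*ρ^2/(μ^2+2*k*ρ^3))))
      (min_le_right (2*α*ρ*pρ/(θ*pθ^2)) (2*k*μ*ρ^2/(μ^2+2*k*ρ^3)))
    rw [le_div_iff₀ (by positivity)] at h
    linarith
  set c₃ := min (min (ε/2) (μ/ρ)) (α/(eθ*ρ)) with hc₃def
  have hc₃0 : 0 < c₃ := lt_min (lt_min (by positivity) (by positivity)) (by positivity)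
  have hcc1 : c₃ ≤ ε / 2 := le_trans (min_le_left _ _) (min_le_left _ _)
  have hcc2 : c₃ * ρ ≤ μ := by
    have h : c₃ ≤ μ/ρ := le_trans (min_le_left (min (ε/2) (μ/ρ)) (α/(eθ*ρ)))
      (min_le_right (ε/2) (μ/ρ))
    rw [le_div_iff₀ hρ] at h; linarith
  have hcc3 : c₃ * (eθ * ρ) ≤ α := by
    have h : c₃ ≤ α/(eθ*ρ) := min_le_right (min (ε/2) (μ/ρ)) (α/(eθ*ρ))
    rw [le_div_iff₀ (by positivity)] at h; linarith
  set m' := min (min (eθ*θ*pρ) (eθ*θ*(k*ρ))) (min (eθ*θ*ρ^2) (eθ^2*ρ^2)) with hm'def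
  set M' := max (max (eθ*θ*pρ) (eθ*θ*(k*ρ))) (max (eθ*θ*ρ^2) (eθ^2*ρ^2)) with hM'def
  have hm'0 : 0 < m' := lt_min (lt_min (by positivity) (by positivity)) (lt_min (by positivity) (by positivity))
  have hM'0 : 0 < M' := lt_of_lt_of_le (by positivity : (0:ℝ) < eθ*θ*pρ)
    (le_trans (le_max_left _ _) (le_max_left _ _))
  have hm'1 : m' ≤ eθ*θ*pρ := le_trans (min_le_left _ _) (min_le_left _ _)
  have hm'2 : m' ≤ eθ*θ*(k*ρ) := le_trans (min_le_left _ _) (min_le_right _ _)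
  have hm'3 : m' ≤ eθ*θ*ρ^2 := le_trans (min_le_right _ _) (min_le_left _ _)
  have hm'4 : m' ≤ eθ^2*ρ^2 := le_trans (min_le_right _ _) (min_le_right _ _)
  have hM'1 : eθ*θ*pρ ≤ M' := le_trans (le_max_left _ _) (le_max_left _ _)
  have hM'2 : eθ*θ*(k*ρ) ≤ M' := le_trans (le_max_right _ _) (le_max_left _ _)
  have hM'3 : eθ*θ*ρ^2 ≤ M' := le_trans (le_max_left _ _) (le_max_right _ _)
  have hM'4 : eθ^2*ρ^2 ≤ M' := le_trans (le_max_right _ _) (le_max_right _ _)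
  refine ⟨3*M'/m', by positivity, c₃/3, by positivity, ?_⟩
  intro ξ β A0 A B W hW
  have hβ : β = pρ + ξ ^ 2 * k * ρ := rfl
  have hA0 : A0 = ((1 / θ) • !![pρ / ρ, 0, 0; 0, ρ, 0; 0, 0, eθ * ρ / θ]).map
      (fun x : ℝ => (x : ℂ)) := rfl
  have hA : A = ((1 / θ) • !![pρ * u / ρ, pρ, 0; β, ρ * u, pθ; 0, pθ, ρ * u * eθ / θ]).map
      (fun x : ℝ => (x : ℂ)) := rfl
  have hB : B = ((1 / θ) • !![0, 0, 0; 0, μ, 0; 0, 0, α / θ]).map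
      (fun x : ℝ => (x : ℂ)) := rfl
  have hnsq : ∀ w : ℂ, ‖w‖^2 = w.re^2 + w.im^2 := fun w => by
    rw [Complex.sq_norm, Complex.normSq_apply]; ring
  -- the energy functional
  set E : ℝ → ℝ := fun s =>
    eθ * θ * (pρ + ξ ^ 2 * k * ρ) * ((W s 0).re ^ 2 + (W s 0).im ^ 2)
      + eθ * θ * ρ ^ 2 * ((W s 1).re ^ 2 + (W s 1).im ^ 2)
      + eθ ^ 2 * ρ ^ 2 * ((W s 2).re ^ 2 + (W s 2).im ^ 2)
      - ε * (ρ * eθ * θ) * ξ * ((W s 0).im * (W s 1).re - (W s 0).re * (W s 1).im) with hEdef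
  -- derivative of the energy functional
  have hE : ∀ t ∈ Set.Ici (0:ℝ), HasDerivAt E
      (-(ξ ^ 2) * (ε * eθ * θ * (pρ + ξ ^ 2 * k * ρ) * ((W t 0).re ^ 2 + (W t 0).im ^ 2)
        + (2 * μ * eθ * θ * ρ - ε * ρ ^ 2 * eθ * θ) * ((W t 1).re ^ 2 + (W t 1).im ^ 2)
        + 2 * α * eθ * ρ * ((W t 2).re ^ 2 + (W t 2).im ^ 2)
        + ε * eθ * θ * pθ * ((W t 0).re * (W t 2).re + (W t 0).im * (W t 2).im)
        - ε * ξ * eθ * θ * μ * ((W t 0).im * (W t 1).re - (W t 0).re * (W t 1).im))) t := by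
    intro t ht
    obtain ⟨D, hD, heq⟩ := hW t ht
    rw [hA0, hA, hB, hβ] at heq
    have h0 := congrFun heq 0
    have h1 := congrFun heq 1
    have h2 := congrFun heq 2
    simp [Matrix.mulVec, dotProduct, Fin.sum_univ_three] at h0 h1 h2
    field_simp at h0 h1 h2
    have e0 : D 0 = -(Complex.I * ξ) * (u * W t 0 + ρ * W t 1) := by
      refine mul_left_cancel₀ (show ((pρ:ℂ) * (θ * ρ * θ)) ≠ 0 by
        simp [hθ', hρ', hpρ']) ?_
      linear_combination ((θ:ℂ) * ρ * θ) * h0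
    have e1 : D 1 = ((ρ⁻¹ : ℝ) : ℂ) * (-(Complex.I * ξ) * ((pρ + ξ ^ 2 * k * ρ) * W t 0
        + ρ * u * W t 1 + pθ * W t 2) - ξ ^ 2 * μ * W t 1) := by
      rw [Complex.ofReal_inv]
      refine mul_left_cancel₀ hρ' ?_
      rw [mul_inv_cancel_left₀ hρ']
      linear_combination h1
    have e2 : D 2 = (((eθ * ρ)⁻¹ : ℝ) : ℂ) * (-(Complex.I * ξ) * ((pθ * θ) * W t 1
        + (ρ * u * eθ) * W t 2) - ξ ^ 2 * α * W t 2) := by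
      rw [Complex.ofReal_inv]
      push_cast
      refine mul_left_cancel₀ (show ((eθ:ℂ) * ρ) ≠ 0 from mul_ne_zero heθ' hρ') ?_
      rw [mul_inv_cancel_left₀ (mul_ne_zero heθ' hρ')]
      refine mul_left_cancel₀ (show ((θ:ℂ)^3) ≠ 0 from pow_ne_zero _ hθ') ?_
      linear_combination ((θ:ℂ) ^ 3) * h2
    have hD0 : HasDerivAt (fun s => W s 0) (D 0) t := hasDerivAt_pi.mp hD 0
    have hD1 : HasDerivAt (fun s => W s 1) (D 1) t := hasDerivAt_pi.mp hD 1
    have hD2 : HasDerivAt (fun s => W s 2) (D 2) t := hasDerivAt_pi.mp hD 2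
    rw [e0] at hD0
    rw [e1] at hD1
    rw [e2] at hD2
    -- real and imaginary parts of the component derivatives
    have hr0 : HasDerivAt (fun s => (W s 0).re) (ξ * (u * (W t 0).im + ρ * (W t 1).im)) t := by
      have h := Complex.reCLM.hasFDerivAt.comp_hasDerivAt t hD0
      have hval : Complex.reCLM (-(Complex.I * ξ) * (u * W t 0 + ρ * W t 1)) =
          ξ * (u * (W t 0).im + ρ * (W t 1).im) := by
        simp [Complex.mul_re, Complex.mul_im, ← Complex.ofReal_pow]
        try ring
      rw [hval] at h
      exact h
    have hi0 : HasDerivAt (fun s => (W s 0).im) (-(ξ * (u * (W t 0).re + ρ * (W t 1).re))) t := by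
      have h := Complex.imCLM.hasFDerivAt.comp_hasDerivAt t hD0
      have hval : Complex.imCLM (-(Complex.I * ξ) * (u * W t 0 + ρ * W t 1)) =
          -(ξ * (u * (W t 0).re + ρ * (W t 1).re)) := by
        simp [Complex.mul_re, Complex.mul_im, ← Complex.ofReal_pow]
        try ring
      rw [hval] at h
      exact h
    have hr1 : HasDerivAt (fun s => (W s 1).re)
        (ρ⁻¹ * (ξ * ((pρ + ξ ^ 2 * k * ρ) * (W t 0).im + ρ * u * (W t 1).im + pθ * (W t 2).im)
          - ξ ^ 2 * μ * (W t 1).re)) t := by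
      have h := Complex.reCLM.hasFDerivAt.comp_hasDerivAt t hD1
      have hval : Complex.reCLM (((ρ⁻¹ : ℝ) : ℂ) * (-(Complex.I * ξ) * ((pρ + ξ ^ 2 * k * ρ) * W t 0
          + ρ * u * W t 1 + pθ * W t 2) - ξ ^ 2 * μ * W t 1)) =
          ρ⁻¹ * (ξ * ((pρ + ξ ^ 2 * k * ρ) * (W t 0).im + ρ * u * (W t 1).im + pθ * (W t 2).im)
          - ξ ^ 2 * μ * (W t 1).re) := by
        simp [Complex.mul_re, Complex.mul_im, ← Complex.ofReal_pow]
        try ring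
      rw [hval] at h
      exact h
    have hi1 : HasDerivAt (fun s => (W s 1).im)
        (ρ⁻¹ * (-(ξ * ((pρ + ξ ^ 2 * k * ρ) * (W t 0).re + ρ * u * (W t 1).re + pθ * (W t 2).re))
          - ξ ^ 2 * μ * (W t 1).im)) t := by
      have h := Complex.imCLM.hasFDerivAt.comp_hasDerivAt t hD1
      have hval : Complex.imCLM (((ρ⁻¹ : ℝ) : ℂ) * (-(Complex.I * ξ) * ((pρ + ξ ^ 2 * k * ρ) * W t 0
          + ρ * u * W t 1 + pθ * W t 2) - ξ ^ 2 * μ * W t 1)) =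
          ρ⁻¹ * (-(ξ * ((pρ + ξ ^ 2 * k * ρ) * (W t 0).re + ρ * u * (W t 1).re + pθ * (W t 2).re))
          - ξ ^ 2 * μ * (W t 1).im) := by
        simp [Complex.mul_re, Complex.mul_im, ← Complex.ofReal_pow]
        try ring
      rw [hval] at h
      exact h
    have hr2 : HasDerivAt (fun s => (W s 2).re)
        ((eθ * ρ)⁻¹ * (ξ * (pθ * θ * (W t 1).im + ρ * u * eθ * (W t 2).im)
          - ξ ^ 2 * α * (W t 2).re)) t := by
      have h := Complex.reCLM.hasFDerivAt.comp_hasDerivAt t hD2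
      have hval : Complex.reCLM ((((eθ * ρ)⁻¹ : ℝ) : ℂ) * (-(Complex.I * ξ) * ((pθ * θ) * W t 1
          + (ρ * u * eθ) * W t 2) - ξ ^ 2 * α * W t 2)) =
          (eθ * ρ)⁻¹ * (ξ * (pθ * θ * (W t 1).im + ρ * u * eθ * (W t 2).im)
          - ξ ^ 2 * α * (W t 2).re) := by
        simp [Complex.mul_re, Complex.mul_im, ← Complex.ofReal_pow]
        try ring
      rw [hval] at h
      exact h
    have hi2 : HasDerivAt (fun s => (W s 2).im)
        ((eθ * ρ)⁻¹ * (-(ξ * (pθ * θ * (W t 1).re + ρ * u * eθ * (W t 2).re))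
          - ξ ^ 2 * α * (W t 2).im)) t := by
      have h := Complex.imCLM.hasFDerivAt.comp_hasDerivAt t hD2
      have hval : Complex.imCLM ((((eθ * ρ)⁻¹ : ℝ) : ℂ) * (-(Complex.I * ξ) * ((pθ * θ) * W t 1
          + (ρ * u * eθ) * W t 2) - ξ ^ 2 * α * W t 2)) =
          (eθ * ρ)⁻¹ * (-(ξ * (pθ * θ * (W t 1).re + ρ * u * eθ * (W t 2).re))
          - ξ ^ 2 * α * (W t 2).im) := by
        simp [Complex.mul_re, Complex.mul_im, ← Complex.ofReal_pow]
        try ring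
      rw [hval] at h
      exact h
    rw [hEdef]
    rw [show (fun s =>
        eθ * θ * (pρ + ξ ^ 2 * k * ρ) * ((W s 0).re ^ 2 + (W s 0).im ^ 2)
          + eθ * θ * ρ ^ 2 * ((W s 1).re ^ 2 + (W s 1).im ^ 2)
          + eθ ^ 2 * ρ ^ 2 * ((W s 2).re ^ 2 + (W s 2).im ^ 2)
          - ε * (ρ * eθ * θ) * ξ * ((W s 0).im * (W s 1).re - (W s 0).re * (W s 1).im)) =
        (fun s =>
        eθ * θ * (pρ + ξ ^ 2 * k * ρ) * ((W s 0).re * (W s 0).re + (W s 0).im * (W s 0).im)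
          + eθ * θ * ρ ^ 2 * ((W s 1).re * (W s 1).re + (W s 1).im * (W s 1).im)
          + eθ ^ 2 * ρ ^ 2 * ((W s 2).re * (W s 2).re + (W s 2).im * (W s 2).im)
          - ε * (ρ * eθ * θ) * ξ * ((W s 0).im * (W s 1).re - (W s 0).re * (W s 1).im))
      from funext fun s => by ring]
    rw [nsfk_deriv_id ρ θ pρ pθ eθ k μ α u ξ ε (W t 0).re (W t 0).im (W t 1).re (W t 1).im
      (W t 2).re (W t 2).im hρ.ne' hθ.ne' heθ.ne']
    exact (((((hr0.mul hr0).add (hi0.mul hi0)).const_mul (eθ*θ*(pρ+ξ^2*k*ρ))).add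
        ((((hr1.mul hr1).add (hi1.mul hi1)).const_mul (eθ*θ*ρ^2)))).add
        ((((hr2.mul hr2).add (hi2.mul hi2)).const_mul (eθ^2*ρ^2)))).sub
        (((hi0.mul hr1).sub (hr0.mul hi1)).const_mul (ε*(ρ*eθ*θ)*ξ))
  -- differential inequality
  have hle : ∀ t ∈ Set.Ici (0:ℝ),
      (-(ξ ^ 2) * (ε * eθ * θ * (pρ + ξ ^ 2 * k * ρ) * ((W t 0).re ^ 2 + (W t 0).im ^ 2)
        + (2 * μ * eθ * θ * ρ - ε * ρ ^ 2 * eθ * θ) * ((W t 1).re ^ 2 + (W t 1).im ^ 2)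
        + 2 * α * eθ * ρ * ((W t 2).re ^ 2 + (W t 2).im ^ 2)
        + ε * eθ * θ * pθ * ((W t 0).re * (W t 2).re + (W t 0).im * (W t 2).im)
        - ε * ξ * eθ * θ * μ * ((W t 0).im * (W t 1).re - (W t 0).re * (W t 1).im)))
        ≤ -(2 * (c₃/3) * ξ ^ 2) * E t := by
    intro t _
    have hquad := nsfk_quad ρ θ pρ pθ eθ k μ α ε c₃ hρ hθ hpρ hpθ heθ hk hμ hα
      hε0 hε1 hε2 hε3 hε4 hc₃0.le hcc1 hcc2 hcc3
      ξ (W t 0).re (W t 0).im (W t 1).re (W t 1).im (W t 2).re (W t 2).im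
    have hcmp := (nsfk_cmp ρ θ eθ k ε hρ hθ heθ hk hε0 hε1 hε2
      ξ (W t 0).re (W t 0).im (W t 1).re (W t 1).im (W t 2).re (W t 2).im pρ hpρ).2
    simp only [hEdef]
    exact nsfk_combine c₃ ξ _ _ _ hc₃0.le hquad hcmp
  have hgr := nsfk_gronwall hE hle
  -- final assembly
  intro t ht
  have hEt := hgr t ht
  simp only [hEdef] at hEt
  have hX : (0:ℝ) < Real.exp (-(2 * (c₃/3) * ξ ^ 2 * t)) := Real.exp_pos _
  have hexp_eq : Real.exp (-2 * (c₃/3) * ξ ^ 2 * t) = Real.exp (-(2 * (c₃/3) * ξ ^ 2 * t)) := by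
    ring_nf
  have hcmpt := nsfk_cmp ρ θ eθ k ε hρ hθ heθ hk hε0 hε1 hε2
    ξ (W t 0).re (W t 0).im (W t 1).re (W t 1).im (W t 2).re (W t 2).im pρ hpρ
  have hcmp0 := nsfk_cmp ρ θ eθ k ε hρ hθ heθ hk hε0 hε1 hε2
    ξ (W 0 0).re (W 0 0).im (W 0 1).re (W 0 1).im (W 0 2).re (W 0 2).im pρ hpρ
  rw [hnsq, hnsq, hnsq, hnsq, hnsq, hnsq, hexp_eq]
  have hNt : m' * ((1 + ξ ^ 2) * ((W t 0).re^2 + (W t 0).im^2) + ((W t 1).re^2 + (W t 1).im^2)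
      + ((W t 2).re^2 + (W t 2).im^2)) ≤
      eθ * θ * (pρ + ξ ^ 2 * k * ρ) * ((W t 0).re ^ 2 + (W t 0).im ^ 2)
        + eθ * θ * ρ ^ 2 * ((W t 1).re ^ 2 + (W t 1).im ^ 2)
        + eθ ^ 2 * ρ ^ 2 * ((W t 2).re ^ 2 + (W t 2).im ^ 2) := by
    linarith [mul_le_mul_of_nonneg_right hm'1 (by positivity : (0:ℝ) ≤ (W t 0).re^2 + (W t 0).im^2),
      mul_le_mul_of_nonneg_right hm'2 (by positivity : (0:ℝ) ≤ ξ^2*((W t 0).re^2 + (W t 0).im^2)),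
      mul_le_mul_of_nonneg_right hm'3 (by positivity : (0:ℝ) ≤ (W t 1).re^2 + (W t 1).im^2),
      mul_le_mul_of_nonneg_right hm'4 (by positivity : (0:ℝ) ≤ (W t 2).re^2 + (W t 2).im^2)]
  have hN0 : eθ * θ * (pρ + ξ ^ 2 * k * ρ) * ((W 0 0).re ^ 2 + (W 0 0).im ^ 2)
        + eθ * θ * ρ ^ 2 * ((W 0 1).re ^ 2 + (W 0 1).im ^ 2)
        + eθ ^ 2 * ρ ^ 2 * ((W 0 2).re ^ 2 + (W 0 2).im ^ 2) ≤
      M' * ((1 + ξ ^ 2) * ((W 0 0).re^2 + (W 0 0).im^2) + ((W 0 1).re^2 + (W 0 1).im^2)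
      + ((W 0 2).re^2 + (W 0 2).im^2)) := by
    linarith [mul_le_mul_of_nonneg_right hM'1 (by positivity : (0:ℝ) ≤ (W 0 0).re^2 + (W 0 0).im^2),
      mul_le_mul_of_nonneg_right hM'2 (by positivity : (0:ℝ) ≤ ξ^2*((W 0 0).re^2 + (W 0 0).im^2)),
      mul_le_mul_of_nonneg_right hM'3 (by positivity : (0:ℝ) ≤ (W 0 1).re^2 + (W 0 1).im^2),
      mul_le_mul_of_nonneg_right hM'4 (by positivity : (0:ℝ) ≤ (W 0 2).re^2 + (W 0 2).im^2)]
  set X := Real.exp (-(2 * (c₃/3) * ξ ^ 2 * t)) with hXdef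
  set Nt := (1 + ξ ^ 2) * ((W t 0).re^2 + (W t 0).im^2) + ((W t 1).re^2 + (W t 1).im^2)
      + ((W t 2).re^2 + (W t 2).im^2) with hNtdef
  set N0 := (1 + ξ ^ 2) * ((W 0 0).re^2 + (W 0 0).im^2) + ((W 0 1).re^2 + (W 0 1).im^2)
      + ((W 0 2).re^2 + (W 0 2).im^2) with hN0def
  -- combine everything
  have hA3 := mul_le_mul_of_nonneg_right hcmp0.2 hX.le
  have hA4 := mul_le_mul_of_nonneg_right hN0 (by positivity : (0:ℝ) ≤ 3 * X)
  have hNt0 : 0 ≤ N0 := by positivity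
  have key : m' * Nt ≤ 3 * M' * X * N0 := by linarith [hNt, hcmpt.1, hEt, hA3, hA4]
  have hfin : Nt ≤ (3 * M' * X * N0) / m' := by
    rw [le_div_iff₀ hm'0]
    linarith [key]
  have heq2 : (3 * M' * X * N0) / m' = 3 * M' / m' * X * N0 := by
    field_simp
  linarith [hfin]
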